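/- Let (φ, γ) be a homomorphism of formal group laws (A, F) → (B, G) where B is a torsion-free commutative ring (for instance an integral domain of characteristic 0). If the linear coefficient b_0 of γ is zero, then γ = 0. -/

import Mathlib

/-- Substitution of a power series `g` (intended with zero constant term) into a
one-variable power series `γ`: the coefficient at `d` of `γ(g)` is the (exact, when
`g` has zero constant term) truncated sum `∑_{n ≤ |d|} γ_n · coeff d (g^n)`. -/
noncomputable def psSubst {B : Type*} [CommRing B] {σ : Type*} (g : MvPowerSeries σ B)
    (γ : PowerSeries B) : MvPowerSeries σ B :=
  fun d => ∑ n ∈ Finset.range ((d.sum fun _ m => m) + 1),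
    PowerSeries.coeff n γ * MvPowerSeries.coeff d (g ^ n)

/-- Substitution of a `k`-tuple of power series (intended with zero constant terms)
into a `k`-variable power series `F`, applying `φ` to the coefficients of `F`. -/
noncomputable def mvSubst {A B : Type*} [CommRing A] [CommRing B] {k : ℕ} {σ : Type*}
    (φ : A →+* B) (g : Fin k → MvPowerSeries σ B) (F : MvPowerSeries (Fin k) A) :
    MvPowerSeries σ B :=
  fun d => ∑ e ∈ Finset.Icc (0 : Fin k →₀ ℕ)
      (Finsupp.equivFunOnFinite.symm (Function.const (Fin k) (d.sum fun _ m => m))),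
    φ (MvPowerSeries.coeff e F) * MvPowerSeries.coeff d (∏ i, g i ^ e i)

/-- A (one-dimensional, commutative) formal group law `F ∈ A[[x,y]]`. -/
structure IsFGL {A : Type*} [CommRing A] (F : MvPowerSeries (Fin 2) A) : Prop where
  zero_right : mvSubst (RingHom.id A) ![MvPowerSeries.X 0, 0] F
      = (MvPowerSeries.X 0 : MvPowerSeries (Fin 2) A)
  zero_left : mvSubst (RingHom.id A) ![0, MvPowerSeries.X 1] F
      = (MvPowerSeries.X 1 : MvPowerSeries (Fin 2) A)
  comm : mvSubst (RingHom.id A) ![MvPowerSeries.X 1, MvPowerSeries.X 0] F = F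
  assoc : mvSubst (RingHom.id A)
        ![mvSubst (RingHom.id A) ![MvPowerSeries.X 0, MvPowerSeries.X 1] F,
          (MvPowerSeries.X 2 : MvPowerSeries (Fin 3) A)] F
      = mvSubst (RingHom.id A)
        ![(MvPowerSeries.X 0 : MvPowerSeries (Fin 3) A),
          mvSubst (RingHom.id A) ![MvPowerSeries.X 1, MvPowerSeries.X 2] F] F

/-- A homomorphism of formal group laws `(A,F) → (B,G)`: a ring map `φ` and a power
series `γ` with zero constant term with `φ(F)(γ(x),γ(y)) = γ(G(x,y))`. -/
structure IsFGLHom {A B : Type*} [CommRing A] [CommRing B] (F : MvPowerSeries (Fin 2) A)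
    (G : MvPowerSeries (Fin 2) B) (φ : A →+* B) (γ : PowerSeries B) : Prop where
  const : PowerSeries.constantCoeff γ = 0
  hom : mvSubst φ ![psSubst (MvPowerSeries.X 0) γ, psSubst (MvPowerSeries.X 1) γ] F
      = psSubst G γ

section Helpers

variable {B : Type*} [CommRing B]

lemma coeff_psSubst_raw {σ : Type*} (g : MvPowerSeries σ B) (γ : PowerSeries B) (d : σ →₀ ℕ) :
    MvPowerSeries.coeff d (psSubst g γ) =
      ∑ n ∈ Finset.range ((d.sum fun _ m => m) + 1),
        PowerSeries.coeff n γ * MvPowerSeries.coeff d (g ^ n) := rfl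

lemma coeff_mvSubst_raw {A : Type*} [CommRing A] {k : ℕ} {σ : Type*} (φ : A →+* B)
    (g : Fin k → MvPowerSeries σ B) (F : MvPowerSeries (Fin k) A) (d : σ →₀ ℕ) :
    MvPowerSeries.coeff d (mvSubst φ g F) =
      ∑ e ∈ Finset.Icc (0 : Fin k →₀ ℕ)
        (Finsupp.equivFunOnFinite.symm (Function.const (Fin k) (d.sum fun _ m => m))),
      φ (MvPowerSeries.coeff e F) * MvPowerSeries.coeff d (∏ i, g i ^ e i) := rfl

lemma deg2 (e : Fin 2 →₀ ℕ) : (e.sum fun _ m => m) = e 0 + e 1 := by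
  rw [Finsupp.sum_fintype _ _ (fun _ => rfl), Fin.sum_univ_two]

lemma fin2_ext {e f : Fin 2 →₀ ℕ} (h0 : e 0 = f 0) (h1 : e 1 = f 1) : e = f := by
  ext i; fin_cases i <;> assumption

lemma coeff_pow_lowdeg (f : MvPowerSeries (Fin 2) B) (r : ℕ)
    (hf : ∀ e : Fin 2 →₀ ℕ, e 0 + e 1 < r → MvPowerSeries.coeff e f = 0) :
    ∀ (k : ℕ) (d : Fin 2 →₀ ℕ), d 0 + d 1 < r * k → MvPowerSeries.coeff d (f ^ k) = 0 := by
  intro k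
  induction k with
  | zero => intro d hd; omega
  | succ k ih =>
    intro d hd
    rw [pow_succ, MvPowerSeries.coeff_mul]
    refine Finset.sum_eq_zero fun p hp => ?_
    rw [Finset.HasAntidiagonal.mem_antidiagonal] at hp
    have h0 : p.1 0 + p.2 0 = d 0 := by rw [← hp]; simp
    have h1 : p.1 1 + p.2 1 = d 1 := by rw [← hp]; simp
    have : p.1 0 + p.1 1 < r * k ∨ p.2 0 + p.2 1 < r := by
      have : r * (k + 1) = r * k + r := by ring
      omega
    rcases this with h | h
    · rw [ih p.1 h, zero_mul]
    · rw [hf p.2 h, mul_zero]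

lemma coeff_pow_supp (f : MvPowerSeries (Fin 2) B) (j : Fin 2)
    (hf : ∀ e : Fin 2 →₀ ℕ, e j ≠ 0 → MvPowerSeries.coeff e f = 0) :
    ∀ (k : ℕ) (d : Fin 2 →₀ ℕ), d j ≠ 0 → MvPowerSeries.coeff d (f ^ k) = 0 := by
  intro k
  induction k with
  | zero =>
    intro d hd
    rw [pow_zero, MvPowerSeries.coeff_one, if_neg]
    intro h; rw [h] at hd; simp at hd
  | succ k ih =>
    intro d hd
    rw [pow_succ, MvPowerSeries.coeff_mul]
    refine Finset.sum_eq_zero fun p hp => ?_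
    rw [Finset.HasAntidiagonal.mem_antidiagonal] at hp
    have hj : p.1 j + p.2 j = d j := by rw [← hp]; simp
    rcases Nat.eq_zero_or_pos (p.1 j) with h | h
    · rw [hf p.2 (by omega), mul_zero]
    · rw [ih p.1 (by omega), zero_mul]

lemma coeff_pow_homog (f : MvPowerSeries (Fin 2) B)
    (hf : ∀ e : Fin 2 →₀ ℕ, e 0 + e 1 ≠ 1 → MvPowerSeries.coeff e f = 0) :
    ∀ (m : ℕ) (d : Fin 2 →₀ ℕ), d 0 + d 1 ≠ m → MvPowerSeries.coeff d (f ^ m) = 0 := by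
  intro m
  induction m with
  | zero =>
    intro d hd
    rw [pow_zero, MvPowerSeries.coeff_one, if_neg]
    intro h; rw [h] at hd; simp at hd
  | succ m ih =>
    intro d hd
    rw [pow_succ, MvPowerSeries.coeff_mul]
    refine Finset.sum_eq_zero fun p hp => ?_
    rw [Finset.HasAntidiagonal.mem_antidiagonal] at hp
    have h0 : p.1 0 + p.2 0 = d 0 := by rw [← hp]; simp
    have h1 : p.1 1 + p.2 1 = d 1 := by rw [← hp]; simp
    rcases eq_or_ne (p.1 0 + p.1 1) m with h | h
    · rw [hf p.2 (by omega), mul_zero]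
    · rw [ih p.1 h, zero_mul]

lemma coeff_psSubst_X (γ : PowerSeries B) (i : Fin 2) (a : Fin 2 →₀ ℕ) :
    MvPowerSeries.coeff a (psSubst (MvPowerSeries.X i) γ) =
      if a = Finsupp.single i (a i) then PowerSeries.coeff (a i) γ else 0 := by
  rw [coeff_psSubst_raw]
  split_ifs with h
  · rw [Finset.sum_eq_single (a i)]
    · rw [MvPowerSeries.coeff_X_pow, if_pos h, mul_one]
    · intro n _ hn
      rw [MvPowerSeries.coeff_X_pow, if_neg, mul_zero]
      intro hh
      exact hn (by rw [hh, Finsupp.single_eq_same])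
    · intro hmem
      exfalso; apply hmem
      rw [Finset.mem_range]
      have : a i ≤ a.sum fun _ m => m := by
        rcases eq_or_ne i 0 with rfl | hi
        · rw [deg2]; omega
        · have : i = 1 := by omega
          subst this; rw [deg2]; omega
      omega
  · refine Finset.sum_eq_zero fun n _ => ?_
    rw [MvPowerSeries.coeff_X_pow, if_neg, mul_zero]
    intro hh
    exact h (by rw [hh, Finsupp.single_eq_same])

lemma symm_const_apply (n : ℕ) (i : Fin 2) :
    (Finsupp.equivFunOnFinite.symm (Function.const (Fin 2) n)) i = n := rfl

/-- Extraction: for a FGL `G`, the constant coefficient vanishes. -/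
lemma fgl_coeff_zero (G : MvPowerSeries (Fin 2) B) (hG : IsFGL G) :
    MvPowerSeries.coeff 0 G = 0 := by
  have h := congrArg (MvPowerSeries.coeff 0) hG.zero_right
  rw [coeff_mvSubst_raw] at h
  have hb : (Finsupp.equivFunOnFinite.symm (Function.const (Fin 2)
      ((0 : Fin 2 →₀ ℕ).sum fun _ m => m))) = 0 := by
    ext i
    simp [symm_const_apply]
  rw [hb, Finset.Icc_self, Finset.sum_singleton] at h
  simpa using h

lemma fgl_coeff_X0 (G : MvPowerSeries (Fin 2) B) (hG : IsFGL G) :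
    MvPowerSeries.coeff (Finsupp.single 0 1) G = 1 := by
  have h := congrArg (MvPowerSeries.coeff (Finsupp.single 0 1)) hG.zero_right
  rw [coeff_mvSubst_raw] at h
  rw [Finset.sum_eq_single (Finsupp.single (0 : Fin 2) 1)] at h
  · simp only [Fin.prod_univ_two, Matrix.cons_val_zero, Matrix.cons_val_one, Matrix.head_cons,
      Finsupp.single_eq_same, Finsupp.single_eq_of_ne (by decide : (1 : Fin 2) ≠ 0),
      pow_one, pow_zero, mul_one, RingHom.id_apply] at h
    rw [MvPowerSeries.coeff_X, if_pos rfl] at h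
    simpa using h
  · intro e _ hne
    simp only [Fin.prod_univ_two, Matrix.cons_val_zero, Matrix.cons_val_one, Matrix.head_cons]
    rcases eq_or_ne (e 1) 0 with h1 | h1
    · rw [h1, pow_zero, mul_one, MvPowerSeries.coeff_X_pow, if_neg, mul_zero]
      intro hh
      apply hne
      have he0 : e 0 = 1 := by
        have := congrArg (fun f : Fin 2 →₀ ℕ => f 0) hh
        simpa using this.symm
      exact fin2_ext (by simp [he0]) (by simp [h1])
    · rw [zero_pow h1, mul_zero, map_zero, mul_zero]
  · intro hmem
    exfalso; apply hmem
    rw [Finset.mem_Icc]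
    constructor
    · exact zero_le
    · rw [Finsupp.le_def]
      intro i
      rw [symm_const_apply]
      have : ((Finsupp.single (0 : Fin 2) 1).sum fun _ m => m) = 1 := by
        rw [deg2]; simp
      rw [this, Finsupp.single_apply]
      split <;> omega

lemma fgl_coeff_X1 (G : MvPowerSeries (Fin 2) B) (hG : IsFGL G) :
    MvPowerSeries.coeff (Finsupp.single 1 1) G = 1 := by
  have h := congrArg (MvPowerSeries.coeff (Finsupp.single 1 1)) hG.zero_left
  rw [coeff_mvSubst_raw] at h
  rw [Finset.sum_eq_single (Finsupp.single (1 : Fin 2) 1)] at h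
  · simp only [Fin.prod_univ_two, Matrix.cons_val_zero, Matrix.cons_val_one, Matrix.head_cons,
      Finsupp.single_eq_same, Finsupp.single_eq_of_ne (by decide : (0 : Fin 2) ≠ 1),
      pow_one, pow_zero, one_mul, RingHom.id_apply] at h
    rw [MvPowerSeries.coeff_X, if_pos rfl] at h
    simpa using h
  · intro e _ hne
    simp only [Fin.prod_univ_two, Matrix.cons_val_zero, Matrix.cons_val_one, Matrix.head_cons]
    rcases eq_or_ne (e 0) 0 with h0 | h0
    · rw [h0, pow_zero, one_mul, MvPowerSeries.coeff_X_pow, if_neg, mul_zero]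
      intro hh
      apply hne
      have he1 : e 1 = 1 := by
        have := congrArg (fun f : Fin 2 →₀ ℕ => f 1) hh
        simpa using this.symm
      exact fin2_ext (by simp [h0]) (by simp [he1])
    · rw [zero_pow h0, zero_mul, map_zero, mul_zero]
  · intro hmem
    exfalso; apply hmem
    rw [Finset.mem_Icc]
    constructor
    · exact zero_le
    · rw [Finsupp.le_def]
      intro i
      rw [symm_const_apply]
      have : ((Finsupp.single (1 : Fin 2) 1).sum fun _ m => m) = 1 := by
        rw [deg2]; simp
      rw [this, Finsupp.single_apply]
      split <;> omega

end Helpers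

/-- A homomorphism of formal group laws into a torsion-free ring whose linear
coefficient vanishes has `γ = 0`. -/


theorem stmt5 {A B : Type*} [CommRing A] [CommRing B]
    (F : MvPowerSeries (Fin 2) A) (G : MvPowerSeries (Fin 2) B)
    (hF : IsFGL F) (hG : IsFGL G) (φ : A →+* B) (γ : PowerSeries B)
    (hhom : IsFGLHom F G φ γ)
    (htf : ∀ (n : ℕ) (b : B), n ≠ 0 → n • b = 0 → b = 0)
    (h1 : PowerSeries.coeff 1 γ = 0) :
    γ = 0 := by
  -- the three low-degree coefficients of G
  have hG0 := fgl_coeff_zero G hG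
  have hGx := fgl_coeff_X0 G hG
  have hGy := fgl_coeff_X1 G hG
  -- main claim by strong induction
  have key : ∀ r : ℕ, PowerSeries.coeff r γ = 0 := by
    intro r
    induction r using Nat.strong_induction_on with
    | _ r IH =>
      match r, IH with
      | 0, _ => simpa [← PowerSeries.coeff_zero_eq_constantCoeff] using hhom.const
      | 1, _ => exact h1
      | (m + 2), IH =>
        set r := m + 2 with hr_def
        have hr2 : 2 ≤ r := by omega
        -- the monomial x * y^(r-1)
        set d : Fin 2 →₀ ℕ := Finsupp.single 0 1 + Finsupp.single (1 : Fin 2) (r - 1) with hd_def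
        have hd0 : d 0 = 1 := by
          simp [hd_def, Finsupp.single_apply]
        have hd1 : d 1 = r - 1 := by
          simp [hd_def, Finsupp.single_apply]
        have hdsum : (d.sum fun _ m => m) = r := by
          rw [deg2, hd0, hd1]; omega
        -- properties of γ(x), γ(y)
        set γx := psSubst (MvPowerSeries.X (0 : Fin 2)) γ with hγx
        set γy := psSubst (MvPowerSeries.X (1 : Fin 2)) γ with hγy
        have hx_supp : ∀ a : Fin 2 →₀ ℕ, a 1 ≠ 0 → MvPowerSeries.coeff a γx = 0 := by
          intro a ha
          rw [hγx, coeff_psSubst_X, if_neg]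
          intro hh
          apply ha
          have := congrArg (fun f : Fin 2 →₀ ℕ => f 1) hh
          simpa [Finsupp.single_apply] using this
        have hy_supp : ∀ a : Fin 2 →₀ ℕ, a 0 ≠ 0 → MvPowerSeries.coeff a γy = 0 := by
          intro a ha
          rw [hγy, coeff_psSubst_X, if_neg]
          intro hh
          apply ha
          have := congrArg (fun f : Fin 2 →₀ ℕ => f 0) hh
          simpa [Finsupp.single_apply] using this
        have hx_low : ∀ a : Fin 2 →₀ ℕ, a 0 + a 1 < r → MvPowerSeries.coeff a γx = 0 := by
          intro a ha
          rw [hγx, coeff_psSubst_X]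
          split_ifs with h
          · exact IH (a 0) (by omega)
          · rfl
        -- coefficient of d in the LHS of the hom equation is 0
        have hLHS : MvPowerSeries.coeff d
            (mvSubst φ ![γx, γy] F) = 0 := by
          rw [coeff_mvSubst_raw]
          refine Finset.sum_eq_zero fun e _ => ?_
          simp only [Fin.prod_univ_two, Matrix.cons_val_zero, Matrix.cons_val_one,
            Matrix.head_cons]
          rw [MvPowerSeries.coeff_mul]
          rw [Finset.sum_eq_zero, mul_zero]
          intro p hp
          rw [Finset.HasAntidiagonal.mem_antidiagonal] at hp
          have hp0 : p.1 0 + p.2 0 = 1 := by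
            have := congrArg (fun f : Fin 2 →₀ ℕ => f 0) hp
            simpa [hd0] using this
          have hp1 : p.1 1 + p.2 1 = r - 1 := by
            have := congrArg (fun f : Fin 2 →₀ ℕ => f 1) hp
            simpa [hd1] using this
          rcases eq_or_ne (p.1 1) 0 with hq1 | hq1
          · rcases eq_or_ne (p.2 0) 0 with hq2 | hq2
            · -- p.1 = single 0 1
              have hp10 : p.1 0 = 1 := by omega
              rcases Nat.eq_zero_or_pos (e 0) with he0 | he0
              · rw [he0, pow_zero, MvPowerSeries.coeff_one, if_neg, zero_mul]
                intro hh
                have := congrArg (fun f : Fin 2 →₀ ℕ => f 0) hh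
                simp [hp10] at this
              · rw [coeff_pow_lowdeg γx r hx_low (e 0) p.1, zero_mul]
                have : r * 1 ≤ r * e 0 := Nat.mul_le_mul_left r he0
                omega
            · rw [coeff_pow_supp γy 0 hy_supp (e 1) p.2 hq2, mul_zero]
          · rw [coeff_pow_supp γx 1 hx_supp (e 0) p.1 hq1, zero_mul]
        -- coefficient of d in the RHS is γ_r * coeff d (G^r)
        have hRHS : MvPowerSeries.coeff d (psSubst G γ)
            = PowerSeries.coeff r γ * MvPowerSeries.coeff d (G ^ r) := by
          rw [coeff_psSubst_raw, hdsum]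
          rw [Finset.sum_eq_single r]
          · intro n hn hne
            rw [Finset.mem_range] at hn
            rw [IH n (by omega), zero_mul]
          · intro h; exact absurd (Finset.self_mem_range_succ r) h
        -- compute coeff d (G^r) = r
        have hGr : MvPowerSeries.coeff d (G ^ r) = (r : B) := by
          set L : MvPowerSeries (Fin 2) B :=
            MvPowerSeries.X 0 + MvPowerSeries.X 1 with hL_def
          have hL : ∀ e : Fin 2 →₀ ℕ, e 0 + e 1 ≠ 1 → MvPowerSeries.coeff e L = 0 := by
            intro e he
            rw [hL_def, map_add, MvPowerSeries.coeff_X, MvPowerSeries.coeff_X,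
              if_neg, if_neg, add_zero]
            · intro hh; subst hh; simp [Finsupp.single_apply] at he
            · intro hh; subst hh; simp [Finsupp.single_apply] at he
          set H : MvPowerSeries (Fin 2) B := G - L with hH_def
          have hH : ∀ e : Fin 2 →₀ ℕ, e 0 + e 1 < 2 → MvPowerSeries.coeff e H = 0 := by
            intro e he
            rw [hH_def, map_sub, hL_def, map_add, MvPowerSeries.coeff_X, MvPowerSeries.coeff_X]
            have hcase : (e 0 = 0 ∧ e 1 = 0) ∨ (e 0 = 0 ∧ e 1 = 1) ∨ (e 0 = 1 ∧ e 1 = 0) := by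
              omega
            rcases hcase with ⟨h0, h1⟩ | ⟨h0, h1⟩ | ⟨h0, h1⟩
            · have he0 : e = 0 := fin2_ext (by simp [h0]) (by simp [h1])
              subst he0
              rw [hG0, if_neg (Ne.symm ((fun h => one_ne_zero (Finsupp.single_eq_zero.1 h)))),
                if_neg (Ne.symm ((fun h => one_ne_zero (Finsupp.single_eq_zero.1 h))))]
              ring
            · have he0 : e = Finsupp.single 1 1 := fin2_ext (by simp [h0]) (by simp [h1])
              subst he0
              rw [hGy, if_neg, if_pos rfl]
              · ring
              · intro hh
                have := congrArg (fun f : Fin 2 →₀ ℕ => f 0) hh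
                simp [Finsupp.single_apply] at this
            · have he0 : e = Finsupp.single 0 1 := fin2_ext (by simp [h0]) (by simp [h1])
              subst he0
              rw [hGx, if_pos rfl, if_neg]
              · ring
              · intro hh
                have := congrArg (fun f : Fin 2 →₀ ℕ => f 1) hh
                simp [Finsupp.single_apply] at this
          have hGLH : G = L + H := by rw [hH_def]; ring
          rw [hGLH, add_pow, map_sum]
          rw [Finset.sum_eq_single r]
          · -- k = r term : coeff d (L^r * H^0 * C(r,r))
            rw [Nat.sub_self, pow_zero, mul_one, Nat.choose_self, Nat.cast_one, mul_one]
            -- coeff d (L^r) = r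
            rw [add_pow, map_sum]
            rw [Finset.sum_eq_single 1]
            · rw [MvPowerSeries.X_pow_eq, MvPowerSeries.X_pow_eq,
                MvPowerSeries.monomial_mul_monomial, one_mul, mul_comm, ← nsmul_eq_mul,
                map_nsmul, MvPowerSeries.coeff_monomial, if_pos (by rw [hd_def]),
                Nat.choose_one_right, nsmul_eq_mul, mul_one]
            · intro j hj hne
              rw [MvPowerSeries.X_pow_eq, MvPowerSeries.X_pow_eq,
                MvPowerSeries.monomial_mul_monomial, one_mul, mul_comm, ← nsmul_eq_mul,
                map_nsmul, MvPowerSeries.coeff_monomial, if_neg, smul_zero]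
              intro hh
              apply hne
              have := congrArg (fun f : Fin 2 →₀ ℕ => f 0) hh
              simpa [hd0, Finsupp.single_apply,
                Finsupp.single_eq_of_ne (by decide : (1 : Fin 2) ≠ 0)] using this.symm
            · intro h
              exact absurd (Finset.mem_range.2 (by omega)) h
          · intro k hk hne
            rw [Finset.mem_range] at hk
            rw [mul_comm, ← nsmul_eq_mul, map_nsmul]
            have hcz : MvPowerSeries.coeff d (L ^ k * H ^ (r - k)) = 0 := by
              rw [MvPowerSeries.coeff_mul]
              refine Finset.sum_eq_zero fun p hp => ?_
              rw [Finset.HasAntidiagonal.mem_antidiagonal] at hp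
              have hp0 : p.1 0 + p.2 0 = d 0 := by rw [← hp]; simp
              have hp1 : p.1 1 + p.2 1 = d 1 := by rw [← hp]; simp
              rcases eq_or_ne (p.1 0 + p.1 1) k with hq | hq
              · rw [coeff_pow_lowdeg H 2 hH (r - k) p.2 (by omega), mul_zero]
              · rw [coeff_pow_homog L hL k p.1 hq, zero_mul]
            rw [hcz, smul_zero]
          · intro h
            exact absurd (Finset.self_mem_range_succ r) h
        -- combine
        have heq := congrArg (MvPowerSeries.coeff d) hhom.hom
        have hzero : PowerSeries.coeff r γ * (r : B) = 0 := by
          rw [← hGr, ← hRHS, ← heq]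
          exact hLHS
        have : r • PowerSeries.coeff r γ = 0 := by
          rw [nsmul_eq_mul, mul_comm]
          exact hzero
        exact htf r _ (by omega) this
  ext n
  rw [key n, map_zero]
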